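/- Let σ be a finite signed measure on [0,∞) such that ∫(ax+b) dσ = 0 for every affine function. Then the following are equivalent: (1) ∫φ dσ ≥ 0 for every convex φ : [0,∞) → ℝ; (2) for all t ≥ 0, ∫_t^∞ σ((λ,∞)) dλ ≥ 0; (3) for all t ≥ 0, ∫ max(x−t,0) dσ(x) ≥ 0. -/

import Mathlib

open MeasureTheory Set Filter Topology


noncomputable def gslope (φ : ℝ → ℝ) (q : ℝ) : ℝ :=
  sSup ((fun y => (φ q - φ y) / (q - y)) '' Ico 0 q)

section conv
variable {φ : ℝ → ℝ} (hφ : ConvexOn ℝ (Set.Ici 0) φ)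

lemma gslope_set_nonempty {q : ℝ} (hq : 0 < q) :
    ((fun y => (φ q - φ y) / (q - y)) '' Ico 0 q).Nonempty :=
  ⟨_, mem_image_of_mem _ (⟨le_refl 0, hq⟩ : (0:ℝ) ∈ Ico 0 q)⟩

include hφ in
lemma gslope_bdd {q : ℝ} (hq : 0 < q) :
    BddAbove ((fun y => (φ q - φ y) / (q - y)) '' Ico 0 q) := by
  refine ⟨(φ (q+1) - φ q) / ((q+1) - q), ?_⟩
  rintro s ⟨y, hy, rfl⟩
  exact hφ.slope_mono_adjacent hy.1 (by simp; linarith [hq.le] : (q+1) ∈ Ici (0:ℝ)) hy.2 (by linarith)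

include hφ in
lemma gslope_lower {q y : ℝ} (hy : 0 ≤ y) (hyq : y < q) :
    (φ q - φ y) / (q - y) ≤ gslope φ q :=
  le_csSup (gslope_bdd hφ (lt_of_le_of_lt hy hyq)) (mem_image_of_mem _ ⟨hy, hyq⟩)

include hφ in
lemma gslope_upper {q z : ℝ} (hq : 0 < q) (hqz : q < z) :
    gslope φ q ≤ (φ z - φ q) / (z - q) := by
  refine csSup_le (gslope_set_nonempty hq) ?_
  rintro s ⟨y, hy, rfl⟩
  exact hφ.slope_mono_adjacent hy.1 (le_trans hq.le hqz.le) hy.2 hqz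

noncomputable def tang (φ : ℝ → ℝ) (q x : ℝ) : ℝ := φ q + gslope φ q * (x - q)

include hφ in
lemma tang_le {q x : ℝ} (hq : 0 < q) (hx : 0 ≤ x) : tang φ q x ≤ φ x := by
  rcases lt_trichotomy x q with h | h | h
  · have h1 := gslope_lower hφ hx h
    rw [div_le_iff₀ (by linarith)] at h1
    simp only [tang]; nlinarith
  · simp [tang, h]
  · have h1 := gslope_upper hφ hq h
    rw [le_div_iff₀ (by linarith)] at h1
    simp only [tang]; nlinarith

include hφ in
lemma gslope_mono {q r : ℝ} (hq : 0 < q) (hqr : q < r) : gslope φ q ≤ gslope φ r :=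
  le_trans (gslope_upper hφ hq hqr) (gslope_lower hφ hq.le hqr)


include hφ in
lemma tang_le_tang {q b z : ℝ} (hq : 0 < q) (hqb : q ≤ b) (hbz : b ≤ z) :
    tang φ q z ≤ tang φ b z := by
  rcases eq_or_lt_of_le hqb with rfl | hqb
  · exact le_rfl
  · have h1 : tang φ q b ≤ φ b := tang_le hφ hq (by linarith)
    have h2 : gslope φ q ≤ gslope φ b := gslope_mono hφ hq hqb
    simp only [tang] at h1 ⊢
    nlinarith

include hφ in
lemma max_tang_eq (S : Finset ℝ) (hne : S.Nonempty) (hpos : ∀ q ∈ S, 0 < q)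
    {a : ℝ} (ha : ∀ q ∈ S, q < a) (x : ℝ) :
    max (S.sup' hne (fun q => tang φ q x)) (tang φ a x) =
      S.sup' hne (fun q => tang φ q x) + max (tang φ a x - tang φ (S.max' hne) x) 0 := by
  set b := S.max' hne with hbdef
  have hb : b ∈ S := S.max'_mem hne
  have hb0 : 0 < b := hpos b hb
  have hba : b < a := ha b hb
  have hab : tang φ a b ≤ φ b := tang_le hφ (lt_trans hb0 hba) hb0.le
  have hgba : gslope φ b ≤ gslope φ a := gslope_mono hφ hb0 hba
  rcases le_or_gt (tang φ a x) (tang φ b x) with h | h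
  · rw [max_eq_left, max_eq_right (by linarith), add_zero]
    exact le_trans h (Finset.le_sup' (fun q => tang φ q x) hb)
  · -- x > b and sup' = tang b x
    have hxb : b ≤ x := by
      by_contra hc
      push_neg at hc
      have : tang φ a x - tang φ b x ≤ tang φ a b - tang φ b b := by
        simp only [tang]; nlinarith
      simp only [tang, mul_zero] at this
      have : tang φ a x - tang φ b x ≤ tang φ a b - φ b := by
        simpa [tang] using this
      linarith
    have hsup : S.sup' hne (fun q => tang φ q x) = tang φ b x := by
      refine le_antisymm (Finset.sup'_le _ _ fun q hq => ?_) (Finset.le_sup' (fun q => tang φ q x) hb)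
      exact tang_le_tang hφ (hpos q hq) (S.le_max' q hq) hxb
    rw [hsup, max_eq_right h.le, max_eq_left (by linarith)]
    ring
end conv



lemma hinge_integrable (μ : Measure ℝ) [IsFiniteMeasure μ]
    (hint : Integrable (fun x : ℝ => x) μ) (t : ℝ) :
    Integrable (fun x => max (x - t) 0) μ := by
  simpa using (hint.sub (integrable_const t)).pos_part

lemma hinge_convex (t : ℝ) : ConvexOn ℝ (Set.Ici 0) (fun x : ℝ => max (x - t) 0) := by
  have h1 : ConvexOn ℝ (Set.Ici 0) (fun x : ℝ => x - t) :=
    (convexOn_id (convex_Ici 0)).sub (concaveOn_const t (convex_Ici 0))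
  simpa [Pi.sup_def] using h1.sup (convexOn_const 0 (convex_Ici 0))

lemma tail_lintegral (μ : Measure ℝ) [IsFiniteMeasure μ]
    (hint : Integrable (fun x : ℝ => x) μ) :
    ∫⁻ l in Set.Ioi (0:ℝ), μ (Set.Ioi l) < ⊤ := by
  have h0 : (0:ℝ→ℝ) ≤ᵐ[μ] fun x => max x 0 := Filter.Eventually.of_forall fun x => le_max_right _ _
  have key := lintegral_eq_lintegral_meas_lt μ (f := fun x => max x 0) h0
    (hint.aemeasurable.max aemeasurable_const)
  have hs : ∫⁻ l in Set.Ioi (0:ℝ), μ {a | l < max a 0} = ∫⁻ l in Set.Ioi (0:ℝ), μ (Set.Ioi l) := by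
    refine setLIntegral_congr_fun measurableSet_Ioi (fun l hl => ?_)
    rw [mem_Ioi] at hl
    congr 1
    ext a
    simp only [mem_setOf_eq, mem_Ioi, lt_max_iff]
    exact ⟨fun h => h.resolve_right (by linarith), Or.inl⟩
  rw [← hs, ← key]
  calc ∫⁻ x, ENNReal.ofReal (max x 0) ∂μ ≤ ∫⁻ x, ‖x‖₊ ∂μ := by
        refine lintegral_mono fun x => ?_
        rw [← enorm_eq_nnnorm, ← ofReal_norm_eq_enorm]
        exact ENNReal.ofReal_le_ofReal (max_le (le_abs_self x) (abs_nonneg x))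
    _ < ⊤ := hint.hasFiniteIntegral

lemma tail_integrable (μ : Measure ℝ) [IsFiniteMeasure μ]
    (hint : Integrable (fun x : ℝ => x) μ) {t : ℝ} (ht : 0 ≤ t) :
    IntegrableOn (fun l => (μ (Set.Ioi l)).toReal) (Set.Ioi t) := by
  refine integrable_toReal_of_lintegral_ne_top ?_ ?_
  · exact (Antitone.measurable (fun u v huv => measure_mono (Ioi_subset_Ioi huv))).aemeasurable
  · have hsub : ∫⁻ l in Set.Ioi t, μ (Set.Ioi l) ≤ ∫⁻ l in Set.Ioi (0:ℝ), μ (Set.Ioi l) :=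
      lintegral_mono_set (Ioi_subset_Ioi ht)
    exact (lt_of_le_of_lt hsub (tail_lintegral μ hint)).ne

lemma integral_shift (g : ℝ → ℝ) (t : ℝ) :
    ∫ s in Set.Ioi (0:ℝ), g (t + s) = ∫ l in Set.Ioi t, g l := by
  rw [← integral_indicator measurableSet_Ioi, ← integral_indicator measurableSet_Ioi,
    ← integral_add_right_eq_self (fun l => (Set.Ioi t).indicator g l) t]
  congr 1
  ext x
  by_cases h : 0 < x
  · simp only [Set.indicator, mem_Ioi, if_pos h, if_pos (show t < x + t by linarith)]
    rw [add_comm]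
  · simp only [Set.indicator, mem_Ioi, if_neg h,
      if_neg (show ¬ t < x + t by intro hc; exact h (by linarith))]

lemma layercake (μ : Measure ℝ) [IsFiniteMeasure μ]
    (hint : Integrable (fun x : ℝ => x) μ) (t : ℝ) :
    ∫ x, max (x - t) 0 ∂μ = ∫ l in Set.Ioi t, (μ (Set.Ioi l)).toReal := by
  have hi := hinge_integrable μ hint t
  rw [hi.integral_eq_integral_meas_lt (Filter.Eventually.of_forall fun x => le_max_right _ _)]
  have hs : ∀ s ∈ Set.Ioi (0:ℝ), (μ {a | s < max (a - t) 0}).toReal = (μ (Set.Ioi (t + s))).toReal := by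
    intro s hs
    simp only [mem_Ioi] at hs
    congr 2
    ext a
    simp only [mem_setOf_eq, mem_Ioi, lt_max_iff]
    constructor
    · rintro (h | h)
      · linarith
      · linarith
    · intro h; left; linarith
  simp only [measureReal_def]
  rw [setIntegral_congr_fun measurableSet_Ioi hs]
  rw [integral_shift (fun l => (μ (Set.Ioi l)).toReal) t]


lemma tang_integrable (μ : Measure ℝ) [IsFiniteMeasure μ]
    (hint : Integrable (fun x : ℝ => x) μ) (φ : ℝ → ℝ) (q : ℝ) :
    Integrable (fun x => tang φ q x) μ := by
  have h : (fun x => tang φ q x) = fun x => gslope φ q * x + (φ q - gslope φ q * q) := by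
    ext x; simp only [tang]; ring
  rw [h]
  exact (hint.const_mul _).add (integrable_const _)

lemma sup'_tang_integrable (μ : Measure ℝ) [IsFiniteMeasure μ]
    (hint : Integrable (fun x : ℝ => x) μ) (φ : ℝ → ℝ) {S : Finset ℝ} (hne : S.Nonempty) :
    Integrable (fun x => S.sup' hne (fun q => tang φ q x)) μ := by
  induction hne using Finset.Nonempty.cons_induction with
  | singleton a => simpa using tang_integrable μ hint φ a
  | cons a s h hs ih =>
    have heq : (fun x => (Finset.cons a s h).sup' (Finset.cons_nonempty h) (fun q => tang φ q x))
        = fun x => max (tang φ a x) (s.sup' hs (fun q => tang φ q x)) := by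
      ext x; rw [Finset.sup'_cons hs]
    rw [heq]
    exact (tang_integrable μ hint φ a).sup ih

section main
variable (σp σm : Measure ℝ) [IsFiniteMeasure σp] [IsFiniteMeasure σm]
  (hintp : Integrable (fun x : ℝ => x) σp)
  (hintm : Integrable (fun x : ℝ => x) σm)
  (haff : ∀ a b : ℝ, ∫ x, (a * x + b) ∂σp = ∫ x, (a * x + b) ∂σm)
  (hC : ∀ t : ℝ, 0 ≤ t → ∫ x, max (x - t) 0 ∂σm ≤ ∫ x, max (x - t) 0 ∂σp)
  {φ : ℝ → ℝ} (hφ : ConvexOn ℝ (Set.Ici 0) φ)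

include hintp hintm haff in
lemma integral_tang_eq (q : ℝ) : ∫ x, tang φ q x ∂σp = ∫ x, tang φ q x ∂σm := by
  have h : (fun x => tang φ q x) = fun x => gslope φ q * x + (φ q - gslope φ q * q) := by
    ext x; simp only [tang]; ring
  rw [h]
  exact haff _ _

include hintp hintm haff hC hφ in
lemma integral_sup'_le (S : Finset ℝ) :
    ∀ (_ : ∀ q ∈ S, 0 < q) (hne : S.Nonempty),
      ∫ x, S.sup' hne (fun q => tang φ q x) ∂σm ≤ ∫ x, S.sup' hne (fun q => tang φ q x) ∂σp := by
  induction S using Finset.induction_on_max with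
  | empty => intro _ hne; exact absurd hne (by simp)
  | insert a S hlt IH =>
    intro hpos hne'
    rcases S.eq_empty_or_nonempty with rfl | hne
    · have hone : insert a (∅ : Finset ℝ) = {a} := rfl
      simp only [hone, Finset.sup'_singleton]
      exact le_of_eq (integral_tang_eq σp σm hintp hintm haff _).symm
    · have hpos' : ∀ q ∈ S, 0 < q := fun q hq => hpos q (Finset.mem_insert_of_mem hq)
      have ha0 : 0 < a := hpos a (Finset.mem_insert_self a S)
      set b := S.max' hne with hbdef
      have hb : b ∈ S := S.max'_mem hne
      have hb0 : 0 < b := hpos' b hb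
      have hba : b < a := hlt b hb
      have hsum : ∀ x, (insert a S).sup' hne' (fun q => tang φ q x) =
          S.sup' hne (fun q => tang φ q x) + max (tang φ a x - tang φ b x) 0 := by
        intro x
        rw [Finset.sup'_insert hne, max_comm]
        exact max_tang_eq hφ S hne hpos' (fun q hq => hlt q hq) x
      set c := gslope φ a - gslope φ b with hc
      have hc0 : 0 ≤ c := sub_nonneg.2 (gslope_mono hφ hb0 hba)
      set d := tang φ a b - φ b with hd'
      have hd : d ≤ 0 := sub_nonpos.2 (tang_le hφ ha0 hb0.le)
      have hrep : ∀ x, tang φ a x - tang φ b x = c * (x - b) + d := by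
        intro x; simp only [tang, hc, hd', tang]; ring
      rcases eq_or_lt_of_le hc0 with hceq | hcpos
      · have hz : ∀ x, max (tang φ a x - tang φ b x) 0 = 0 := by
          intro x
          rw [hrep x, ← hceq, zero_mul, zero_add]
          exact max_eq_right hd
        have he : ∀ x, (insert a S).sup' hne' (fun q => tang φ q x)
            = S.sup' hne (fun q => tang φ q x) := by
          intro x; rw [hsum x, hz x, add_zero]
        calc ∫ x, (insert a S).sup' hne' (fun q => tang φ q x) ∂σm
            = ∫ x, S.sup' hne (fun q => tang φ q x) ∂σm := by
              exact integral_congr_ae (Filter.Eventually.of_forall he)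
          _ ≤ ∫ x, S.sup' hne (fun q => tang φ q x) ∂σp := IH hpos' hne
          _ = ∫ x, (insert a S).sup' hne' (fun q => tang φ q x) ∂σp :=
              (integral_congr_ae (Filter.Eventually.of_forall he)).symm
      · set t0 := b - d / c with ht0def
        have ht0 : 0 ≤ t0 := by
          have : 0 ≤ -d / c := div_nonneg (by linarith) hcpos.le
          have : b ≤ t0 := by rw [ht0def]; rw [neg_div] at this; linarith
          linarith
        have hterm : ∀ x, max (tang φ a x - tang φ b x) 0 = c * max (x - t0) 0 := by
          intro x
          rw [hrep x]
          have hcc : c * (x - b) + d = c * (x - t0) := by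
            field_simp [ht0def]
            have hdc : c * (d / c) = d := by field_simp
            rw [ht0def]; linarith [hdc]
          rw [hcc]
          rcases le_total (x - t0) 0 with h | h
          · have h2 : c * (x - t0) ≤ 0 := by nlinarith
            rw [max_eq_right h, max_eq_right h2, mul_zero]
          · have h2 : 0 ≤ c * (x - t0) := mul_nonneg hcpos.le h
            rw [max_eq_left h, max_eq_left h2]
        have key : ∀ (μ : Measure ℝ) [IsFiniteMeasure μ], Integrable (fun x : ℝ => x) μ →
            ∫ x, (insert a S).sup' hne' (fun q => tang φ q x) ∂μ
              = ∫ x, S.sup' hne (fun q => tang φ q x) ∂μ + c * ∫ x, max (x - t0) 0 ∂μ := by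
          intro μ _ hint
          have he : ∀ x, (insert a S).sup' hne' (fun q => tang φ q x)
              = S.sup' hne (fun q => tang φ q x) + c * max (x - t0) 0 := by
            intro x; rw [hsum x, hterm x]
          rw [integral_congr_ae (Filter.Eventually.of_forall he),
            integral_add (sup'_tang_integrable μ hint φ hne)
              ((hinge_integrable μ hint t0).const_mul c),
            integral_const_mul]
        rw [key σp hintp, key σm hintm]
        exact add_le_add (IH hpos' hne)
          (mul_le_mul_of_nonneg_left (hC t0 ht0) hcpos.le)
end main


lemma ae_nonneg_of_null (μ : Measure ℝ) (hμ : μ (Set.Iio 0) = 0) : ∀ᵐ x ∂μ, 0 ≤ x := by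
  rw [ae_iff]
  have h : {x : ℝ | ¬ 0 ≤ x} = Set.Iio 0 := by ext x; simp
  rw [h]; exact hμ

lemma mass_split (μ : Measure ℝ) [IsFiniteMeasure μ] (hμ : μ (Set.Iio 0) = 0) :
    (μ {0}).toReal + (μ (Set.Ioi 0)).toReal = (μ Set.univ).toReal := by
  have h1 : μ {0} + μ (Set.Ioi 0) = μ (Set.Ici 0) := by
    rw [← Set.Ioi_insert, Set.insert_eq,
      measure_union (Set.disjoint_singleton_left.2 (by simp)) measurableSet_Ioi]
  have h2 : μ (Set.Ici 0) = μ Set.univ := by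
    have h3 := measure_add_measure_compl (μ := μ) (measurableSet_Ici (a := (0:ℝ)))
    rw [compl_Ici, hμ, add_zero] at h3
    exact h3
  rw [← h2, ← h1, ENNReal.toReal_add (measure_ne_top μ _) (measure_ne_top μ _)]

lemma atom_le (σp σm : Measure ℝ) [IsFiniteMeasure σp] [IsFiniteMeasure σm]
    (hp : σp (Set.Iio 0) = 0) (hm : σm (Set.Iio 0) = 0)
    (hintp : Integrable (fun x : ℝ => x) σp)
    (hintm : Integrable (fun x : ℝ => x) σm)
    (haff : ∀ a b : ℝ, ∫ x, (a * x + b) ∂σp = ∫ x, (a * x + b) ∂σm)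
    (hC : ∀ t : ℝ, 0 ≤ t → ∫ x, max (x - t) 0 ∂σm ≤ ∫ x, max (x - t) 0 ∂σp) :
    (σm {0}).toReal ≤ (σp {0}).toReal := by
  set u : ℕ → ℝ → ℝ := fun n x => (x - max (x - 1/(n+1)) 0) * (n+1) with hu
  have ht : ∀ n : ℕ, (0:ℝ) < 1/(n+1) := fun n => by positivity
  have htt : ∀ n : ℕ, (1/((n:ℝ)+1)) * ((n:ℝ)+1) = 1 := fun n => by
    field_simp
  have hxint : ∀ n : ℕ, ∀ (μ : Measure ℝ) [IsFiniteMeasure μ],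
      Integrable (fun x : ℝ => x) μ → Integrable (u n) μ := by
    intro n μ _ hint
    exact (hint.sub (hinge_integrable μ hint _)).mul_const _
  have hmono : ∀ n : ℕ, ∫ x, u n x ∂σp ≤ ∫ x, u n x ∂σm := by
    intro n
    have hxx : ∫ x, x ∂σp = ∫ x, x ∂σm := by
      have := haff 1 0; simpa using this
    have hint : ∀ (μ : Measure ℝ) [IsFiniteMeasure μ], Integrable (fun x : ℝ => x) μ →
        ∫ x, u n x ∂μ = (∫ x, x ∂μ - ∫ x, max (x - 1/(n+1)) 0 ∂μ) * (n+1) := by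
      intro μ _ hint
      rw [hu]
      simp only
      rw [integral_mul_const, integral_sub hint (hinge_integrable μ hint _)]
    rw [hint σp hintp, hint σm hintm]
    have := hC (1/(n+1)) (ht n).le
    have hn1 : (0:ℝ) ≤ (n:ℝ)+1 := by positivity
    nlinarith
  have hlim : ∀ (μ : Measure ℝ) [IsFiniteMeasure μ], μ (Set.Iio 0) = 0 →
      Integrable (fun x : ℝ => x) μ →
      Tendsto (fun n => ∫ x, u n x ∂μ) atTop (𝓝 ((μ (Set.Ioi 0)).toReal)) := by
    intro μ _ hμ hint
    have hgoal : (μ (Set.Ioi 0)).toReal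
        = ∫ x, (Set.Ioi (0:ℝ)).indicator (fun _ => (1:ℝ)) x ∂μ := by
      rw [integral_indicator_const (1:ℝ) measurableSet_Ioi, smul_eq_mul, mul_one, measureReal_def]
    rw [hgoal]
    refine tendsto_integral_of_dominated_convergence (fun _ => (1:ℝ))
      (fun n => (hxint n μ hint).aestronglyMeasurable) (integrable_const 1) ?_ ?_
    · intro n
      filter_upwards [ae_nonneg_of_null μ hμ] with x hx
      rw [Real.norm_eq_abs, abs_le]
      rcases le_total x (1/(n+1)) with h | h
      · have hmax : max (x - 1/((n:ℝ)+1)) 0 = 0 := max_eq_right (by linarith)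
        rw [hu]; simp only [hmax, sub_zero]
        constructor
        · nlinarith
        · nlinarith [htt n]
      · have hmax : max (x - 1/((n:ℝ)+1)) 0 = x - 1/((n:ℝ)+1) := max_eq_left (by linarith)
        rw [hu]; simp only [hmax]
        constructor
        · nlinarith [htt n]
        · nlinarith [htt n]
    · filter_upwards [ae_nonneg_of_null μ hμ] with x hx
      rcases hx.eq_or_lt with rfl | hx0
      · have : ∀ n : ℕ, u n 0 = 0 := by
          intro n
          rw [hu]; simp only
          rw [zero_sub, max_eq_right (by linarith [ht n])]
          ring
        have hind : (Set.Ioi (0:ℝ)).indicator (fun _ => (1:ℝ)) 0 = 0 := by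
          simp
        rw [hind]
        simpa [this] using tendsto_const_nhds (α := ℝ) (f := atTop (α := ℕ))
      · have hind : (Set.Ioi (0:ℝ)).indicator (fun _ => (1:ℝ)) x = 1 := by
          simp [hx0]
        rw [hind]
        obtain ⟨N, hN⟩ := exists_nat_gt (1/x)
        refine tendsto_atTop_of_eventually_const (i₀ := N) (fun n hn => ?_)
        have h1 : 1/((n:ℝ)+1) ≤ x := by
          rw [div_le_iff₀ (by positivity)]
          have h2 : (1:ℝ)/x < N := hN
          rw [div_lt_iff₀ hx0] at h2
          have h3 : (N:ℝ) ≤ (n:ℝ) + 1 := by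
            have := Nat.cast_le (α := ℝ).2 hn
            linarith
          nlinarith
        have hmax : max (x - 1/((n:ℝ)+1)) 0 = x - 1/((n:ℝ)+1) := max_eq_left (by linarith)
        rw [hu]; simp only [hmax]
        have := htt n
        nlinarith
  have h1 := le_of_tendsto_of_tendsto' (hlim σp hp hintp) (hlim σm hm hintm) hmono
  have h2 : (σp Set.univ).toReal = (σm Set.univ).toReal := by
    have h := haff 0 1
    simpa [integral_const, smul_eq_mul, measureReal_def] using h
  linarith [mass_split σp hp, mass_split σm hm]




noncomputable def qseq (n : ℕ) : ℝ := (((Encodable.decode₂ ℚ n).getD 0 : ℚ) : ℝ)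

noncomputable def SS (n : ℕ) : Finset ℝ :=
  insert 1 (((Finset.range n).image qseq).filter (fun q => 0 < q))

lemma one_mem_SS (n : ℕ) : (1:ℝ) ∈ SS n := Finset.mem_insert_self _ _

lemma SS_nonempty (n : ℕ) : (SS n).Nonempty := ⟨1, one_mem_SS n⟩

lemma SS_pos {n : ℕ} : ∀ q ∈ SS n, 0 < q := by
  intro q hq
  rcases Finset.mem_insert.1 hq with rfl | h
  · exact one_pos
  · exact (Finset.mem_filter.1 h).2

lemma SS_mono {n m : ℕ} (h : n ≤ m) : SS n ⊆ SS m :=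
  Finset.insert_subset_insert _
    (Finset.filter_subset_filter _ (Finset.image_subset_image (Finset.range_subset_range.2 h)))

lemma mem_SS_of_rat (r : ℚ) (hr : 0 < (r:ℝ)) : (r:ℝ) ∈ SS (Encodable.encode r + 1) := by
  apply Finset.mem_insert_of_mem
  refine Finset.mem_filter.2 ⟨Finset.mem_image.2
    ⟨Encodable.encode r, Finset.mem_range.2 (Nat.lt_succ_self _), ?_⟩, hr⟩
  simp only [qseq, Encodable.decode₂_encode, Option.getD_some]

theorem conv_to_A (σp σm : Measure ℝ) [IsFiniteMeasure σp] [IsFiniteMeasure σm]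
    (hp : σp (Set.Iio 0) = 0) (hm : σm (Set.Iio 0) = 0)
    (hintp : Integrable (fun x : ℝ => x) σp)
    (hintm : Integrable (fun x : ℝ => x) σm)
    (haff : ∀ a b : ℝ, ∫ x, (a * x + b) ∂σp = ∫ x, (a * x + b) ∂σm)
    (hC : ∀ t : ℝ, 0 ≤ t → ∫ x, max (x - t) 0 ∂σm ≤ ∫ x, max (x - t) 0 ∂σp)
    (φ : ℝ → ℝ) (hφ : ConvexOn ℝ (Set.Ici 0) φ)
    (hφp : Integrable φ σp) (hφm : Integrable φ σm) :
    ∫ x, φ x ∂σm ≤ ∫ x, φ x ∂σp := by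
  set ψ : ℕ → ℝ → ℝ := fun n x => (SS n).sup' (SS_nonempty n) (fun q => tang φ q x) with hψ
  have hmono : ∀ x, Monotone fun n => ψ n x :=
    fun x n m h => Finset.sup'_mono _ (SS_mono h) _
  have hle : ∀ n x, 0 ≤ x → ψ n x ≤ φ x :=
    fun n x hx => Finset.sup'_le _ _ fun q hq => tang_le hφ (SS_pos q hq) hx
  have hge : ∀ n x, tang φ 1 x ≤ ψ n x :=
    fun n x => Finset.le_sup' (fun q => tang φ q x) (one_mem_SS n)
  have hbdd : ∀ x, 0 ≤ x → BddAbove (Set.range fun n => ψ n x) := by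
    intro x hx
    exact ⟨φ x, by rintro y ⟨n, rfl⟩; exact hle n x hx⟩
  -- approximation from below
  have happrox : ∀ x, 0 < x → ∀ ε, 0 < ε → ∃ n, φ x - ε < ψ n x := by
    intro x hx ε hε
    set m0 := (φ (x/2) - φ (x/4)) / (x/2 - x/4) with hm0
    set K := |gslope φ x - m0| + 1 with hK
    have hK0 : 0 < K := by positivity
    have hεK : 0 < ε / K := div_pos hε hK0
    obtain ⟨r, hr1, hr2⟩ := exists_rat_btwn (show max (x/2) (x - ε/K) < x from
      max_lt (by linarith) (by linarith))
    have hq1 : x/2 < (r:ℝ) := lt_of_le_of_lt (le_max_left _ _) hr1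
    have hq2 : x - ε/K < (r:ℝ) := lt_of_le_of_lt (le_max_right _ _) hr1
    have hq0 : 0 < (r:ℝ) := by linarith
    -- gslope φ r ≥ m0
    have hgm : m0 ≤ gslope φ (r:ℝ) := by
      refine le_trans ?_ (gslope_lower hφ (by linarith : (0:ℝ) ≤ x/2) hq1)
      have := hφ.slope_mono_adjacent (Set.mem_Ici.2 (show (0:ℝ) ≤ x/4 by linarith))
        (Set.mem_Ici.2 hq0.le) (show x/4 < x/2 by linarith) hq1
      -- this : (φ (x/2) - φ (x/4))/(x/2 - x/4) ≤ (φ r - φ (x/2))/(r - x/2)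
      rw [hm0]
      convert this using 2 <;> ring_nf
    have hφq : φ x + gslope φ x * ((r:ℝ) - x) ≤ φ (r:ℝ) := tang_le hφ hx hq0.le
    have habs : (gslope φ x - m0) * (x - (r:ℝ)) ≤ |gslope φ x - m0| * (x - (r:ℝ)) :=
      mul_le_mul_of_nonneg_right (le_abs_self _) (by linarith)
    have hlt : |gslope φ x - m0| * (x - (r:ℝ)) < K * (ε / K) :=
      mul_lt_mul'' (by rw [hK]; linarith) (by linarith) (abs_nonneg _) (by linarith)
    have hKeq : K * (ε / K) = ε := mul_div_cancel₀ ε hK0.ne'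
    have htang : φ x - ε < tang φ (r:ℝ) x := by
      have h1 : φ (r:ℝ) + m0 * (x - (r:ℝ)) ≤ tang φ (r:ℝ) x := by
        simp only [tang]
        nlinarith [hgm, (show (0:ℝ) ≤ x - r by linarith)]
      nlinarith
    refine ⟨Encodable.encode r + 1, lt_of_lt_of_le htang ?_⟩
    exact Finset.le_sup' (fun q => tang φ q x) (mem_SS_of_rat r hq0)
  have hsupeq : ∀ x, 0 < x → (⨆ n, ψ n x) = φ x := by
    intro x hx
    refine le_antisymm (ciSup_le fun n => hle n x hx.le) ?_
    by_contra h
    push_neg at h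
    obtain ⟨n, hn⟩ := happrox x hx (φ x - ⨆ n, ψ n x) (by linarith)
    have h2 := le_ciSup (hbdd x hx.le) n
    linarith
  set l0 := ⨆ n, ψ n 0 with hl0def
  set Φ : ℝ → ℝ := fun y => if y = 0 then l0 else φ y with hΦ
  have htend : ∀ x, 0 ≤ x → Tendsto (fun n => ψ n x) atTop (𝓝 (Φ x)) := by
    intro x hx
    rcases hx.eq_or_lt with rfl | hx0
    · have : Φ 0 = l0 := if_pos rfl
      rw [this, hl0def]
      exact tendsto_atTop_ciSup (hmono 0) (hbdd 0 le_rfl)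
    · have : Φ x = φ x := if_neg hx0.ne'
      rw [this, ← hsupeq x hx0]
      exact tendsto_atTop_ciSup (hmono x) (hbdd x hx)
  -- dominated convergence
  have hDCT : ∀ (μ : Measure ℝ) [IsFiniteMeasure μ], μ (Set.Iio 0) = 0 →
      Integrable (fun x : ℝ => x) μ → Integrable φ μ →
      Tendsto (fun n => ∫ x, ψ n x ∂μ) atTop (𝓝 (∫ x, Φ x ∂μ)) := by
    intro μ _ hμ hint hφint
    refine tendsto_integral_of_dominated_convergence (fun x => |φ x| + |tang φ 1 x|)
      (fun n => (sup'_tang_integrable μ hint φ (SS_nonempty n)).aestronglyMeasurable)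
      (hφint.abs.add (tang_integrable μ hint φ 1).abs) ?_ ?_
    · intro n
      filter_upwards [ae_nonneg_of_null μ hμ] with x hx
      have h1 := hge n x
      have h2 := hle n x hx
      rw [Real.norm_eq_abs, abs_le]
      constructor
      · have := neg_abs_le (tang φ 1 x)
        have := abs_nonneg (φ x)
        linarith
      · have := le_abs_self (φ x)
        have := abs_nonneg (tang φ 1 x)
        linarith
    · filter_upwards [ae_nonneg_of_null μ hμ] with x hx using htend x hx
  have hlimle : ∫ x, Φ x ∂σm ≤ ∫ x, Φ x ∂σp :=
    le_of_tendsto_of_tendsto' (hDCT σm hm hintm hφm) (hDCT σp hp hintp hφp)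
      (fun n => integral_sup'_le σp σm hintp hintm haff hC hφ (SS n) SS_pos (SS_nonempty n))
  -- relate ∫ φ and ∫ Φ
  have hl0 : l0 ≤ φ 0 := ciSup_le fun n => hle n 0 le_rfl
  have hdelta : ∀ x, φ x = Φ x + Set.indicator {0} (fun _ => φ 0 - l0) x := by
    intro x
    by_cases hx : x = 0
    · subst hx
      simp only [hΦ, if_pos rfl, Set.indicator_of_mem (Set.mem_singleton (0:ℝ))]
      ring
    · rw [Set.indicator_of_notMem (by simpa using hx)]
      simp only [hΦ, if_neg hx, add_zero]
  have hsplit : ∀ (μ : Measure ℝ) [IsFiniteMeasure μ], Integrable φ μ →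
      ∫ x, φ x ∂μ = ∫ x, Φ x ∂μ + (μ {0}).toReal * (φ 0 - l0) := by
    intro μ _ hφint
    have hindint : Integrable (Set.indicator {0} (fun _ => φ 0 - l0)) μ :=
      (integrable_const _).indicator (measurableSet_singleton 0)
    have hΦint : Integrable Φ μ := by
      have : Φ = fun x => φ x - Set.indicator {0} (fun _ => φ 0 - l0) x := by
        ext x; rw [hdelta x]; ring
      rw [this]
      exact hφint.sub hindint
    calc ∫ x, φ x ∂μ = ∫ x, (Φ x + Set.indicator {0} (fun _ => φ 0 - l0) x) ∂μ :=
          integral_congr_ae (Filter.Eventually.of_forall hdelta)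
      _ = ∫ x, Φ x ∂μ + ∫ x, Set.indicator {0} (fun _ => φ 0 - l0) x ∂μ :=
          integral_add hΦint hindint
      _ = ∫ x, Φ x ∂μ + (μ {0}).toReal * (φ 0 - l0) := by
          rw [integral_indicator_const _ (measurableSet_singleton 0), smul_eq_mul, measureReal_def]
  have hatom := atom_le σp σm hp hm hintp hintm haff hC
  rw [hsplit σp hφp, hsplit σm hφm]
  have := mul_le_mul_of_nonneg_right hatom (show (0:ℝ) ≤ φ 0 - l0 by linarith)
  linarith


/-- A finite signed measure on `[0,∞)` is modeled as the difference `σ = σp - σm`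
of two finite measures supported on `[0,∞)`, with finite first moments, such that
`∫ L dσ = 0` for every affine `L`. Equivalence of: (1) `∫ φ dσ ≥ 0` for all convex `φ`;
(2) `∫_t^∞ σ((λ,∞)) dλ ≥ 0` for `t ≥ 0`; (3) `∫ [x-t]⁺ dσ ≥ 0` for `t ≥ 0`. -/
theorem stmt0 (σp σm : Measure ℝ) [IsFiniteMeasure σp] [IsFiniteMeasure σm]
    (hp : σp (Set.Iio 0) = 0) (hm : σm (Set.Iio 0) = 0)
    (hintp : Integrable (fun x : ℝ => x) σp)
    (hintm : Integrable (fun x : ℝ => x) σm)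
    (haff : ∀ a b : ℝ, ∫ x, (a * x + b) ∂σp = ∫ x, (a * x + b) ∂σm) :
    ((∀ φ : ℝ → ℝ, ConvexOn ℝ (Set.Ici 0) φ → Integrable φ σp → Integrable φ σm →
        ∫ x, φ x ∂σm ≤ ∫ x, φ x ∂σp) ↔
      (∀ t : ℝ, 0 ≤ t →
        0 ≤ ∫ l in Set.Ioi t,
          ((σp (Set.Ioi l)).toReal - (σm (Set.Ioi l)).toReal))) ∧
    ((∀ t : ℝ, 0 ≤ t →
        0 ≤ ∫ l in Set.Ioi t,
          ((σp (Set.Ioi l)).toReal - (σm (Set.Ioi l)).toReal)) ↔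
      (∀ t : ℝ, 0 ≤ t →
        ∫ x, max (x - t) 0 ∂σm ≤ ∫ x, max (x - t) 0 ∂σp)) := by
  have hBC : ∀ t : ℝ, 0 ≤ t →
      ((0 ≤ ∫ l in Set.Ioi t, ((σp (Set.Ioi l)).toReal - (σm (Set.Ioi l)).toReal)) ↔
        (∫ x, max (x - t) 0 ∂σm ≤ ∫ x, max (x - t) 0 ∂σp)) := by
    intro t ht
    have hsub : ∫ l in Set.Ioi t, ((σp (Set.Ioi l)).toReal - (σm (Set.Ioi l)).toReal)
        = (∫ l in Set.Ioi t, (σp (Set.Ioi l)).toReal)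
          - ∫ l in Set.Ioi t, (σm (Set.Ioi l)).toReal :=
      integral_sub (tail_integrable σp hintp ht) (tail_integrable σm hintm ht)
    rw [hsub, ← layercake σp hintp t, ← layercake σm hintm t]
    exact sub_nonneg
  have hAC : (∀ φ : ℝ → ℝ, ConvexOn ℝ (Set.Ici 0) φ → Integrable φ σp → Integrable φ σm →
      ∫ x, φ x ∂σm ≤ ∫ x, φ x ∂σp) →
      ∀ t : ℝ, 0 ≤ t → ∫ x, max (x - t) 0 ∂σm ≤ ∫ x, max (x - t) 0 ∂σp := by
    intro hA t _
    exact hA _ (hinge_convex t) (hinge_integrable σp hintp t) (hinge_integrable σm hintm t)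
  constructor
  · constructor
    · intro hA t ht
      exact (hBC t ht).2 (hAC hA t ht)
    · intro hB φ hφ h1 h2
      exact conv_to_A σp σm hp hm hintp hintm haff
        (fun t ht => (hBC t ht).1 (hB t ht)) φ hφ h1 h2
  · constructor
    · intro hB t ht
      exact (hBC t ht).1 (hB t ht)
    · intro hCc t ht
      exact (hBC t ht).2 (hCc t ht)
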